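/- Let T : [0,1] → [0,1] be measure-preserving with respect to Lebesgue measure m, and let L be the transfer operator of T with respect to m. If ψ ∈ L^∞([0,1]) satisfies Lψ = 0 and ψ ≠ 0, then for any z ∈ ℂ with |z| < 1 the function h_z = Σ_{ℓ=0}^∞ z^ℓ ψ∘T^ℓ converges in L^p for every p ∈ [1,∞], is nonzero, and satisfies L h_z = z h_z. -/

import Mathlib

open Set MeasureTheory Filter Topology
open scoped ENNReal

/-- Lebesgue measure restricted to `[0,1]`. -/
noncomputable def μ01 : Measure ℝ := volume.restrict (Icc (0 : ℝ) 1)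

instance : IsProbabilityMeasure μ01 := ⟨by simp [μ01]⟩

/-- Extract an a.e. bound from membership in `L^∞`. -/
lemma exists_ae_bound_of_memℒp_top {μ : Measure ℝ} {f : ℝ → ℂ} (hf : MemLp f ⊤ μ) :
    ∃ c : ℝ, 0 ≤ c ∧ ∀ᵐ x ∂μ, ‖f x‖ ≤ c := by
  refine ⟨(eLpNorm f ⊤ μ).toReal, ENNReal.toReal_nonneg, ?_⟩
  have h2 : eLpNormEssSup f μ ≠ ⊤ := by
    rw [← eLpNorm_exponent_top]; exact hf.2.ne
  filter_upwards [ae_le_eLpNormEssSup (f := f) (μ := μ)] with x hx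
  have := ENNReal.toReal_mono h2 hx
  simpa [eLpNorm_exponent_top] using this

/-- An `L¹` function whose integral against every bounded function vanishes is zero. -/
lemma L1_eq_zero_of_integral_mul {μ : Measure ℝ} (u : Lp ℂ 1 μ)
    (h : ∀ g : ℝ → ℂ, MemLp g ⊤ μ → ∫ x, (u : ℝ → ℂ) x * g x ∂μ = 0) : u = 0 := by
  have hum : Measurable (u : ℝ → ℂ) := (Lp.stronglyMeasurable u).measurable
  set g : ℝ → ℂ := fun x =>
    if (u : ℝ → ℂ) x = 0 then 0 else (starRingEnd ℂ) ((u : ℝ → ℂ) x) / ‖(u : ℝ → ℂ) x‖ with hgdef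
  have hgm : Measurable g := by
    apply Measurable.ite (hum (measurableSet_singleton 0)) measurable_const
    exact (Complex.continuous_conj.measurable.comp hum).div (Complex.measurable_ofReal.comp hum.norm)
  have hgb : ∀ x, ‖g x‖ ≤ 1 := by
    intro x
    by_cases hx : (u : ℝ → ℂ) x = 0
    · simp [hgdef, if_pos hx]
    · have hnx : ‖(u : ℝ → ℂ) x‖ ≠ 0 := norm_ne_zero_iff.mpr hx
      simp only [hgdef, if_neg hx, norm_div, RCLike.norm_conj, Complex.norm_real,
        Real.norm_eq_abs, abs_of_nonneg (norm_nonneg ((u : ℝ → ℂ) x))]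
      rw [div_self hnx]
  have hgmem : MemLp g ⊤ μ := memLp_top_of_bound hgm.aestronglyMeasurable 1 (ae_of_all _ hgb)
  have key : ∀ x, (u : ℝ → ℂ) x * g x = (‖(u : ℝ → ℂ) x‖ : ℂ) := by
    intro x
    by_cases hx : (u : ℝ → ℂ) x = 0
    · simp [hgdef, hx]
    · have hnx : (‖(u : ℝ → ℂ) x‖ : ℂ) ≠ 0 :=
        Complex.ofReal_ne_zero.mpr (norm_ne_zero_iff.mpr hx)
      simp only [hgdef, if_neg hx]
      rw [mul_div_assoc', Complex.mul_conj]
      rw [div_eq_iff hnx]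
      rw [← Complex.ofReal_mul]
      norm_cast
      rw [Complex.normSq_eq_norm_sq]
      ring
  have h0 := h g hgmem
  have h1 : ∫ x, (‖(u : ℝ → ℂ) x‖ : ℂ) ∂μ = 0 := by
    rw [← h0]; exact integral_congr_ae (ae_of_all _ fun x => (key x).symm)
  have h1' := (integral_ofReal (𝕜 := ℂ) (f := fun x => ‖(u : ℝ → ℂ) x‖) (μ := μ)).symm.trans h1
  have h2 : ∫ x, ‖(u : ℝ → ℂ) x‖ ∂μ = 0 := RCLike.ofReal_eq_zero.mp h1'
  have h3 : (fun x => ‖(u : ℝ → ℂ) x‖) =ᵐ[μ] 0 :=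
    (integral_eq_zero_iff_of_nonneg (fun x => norm_nonneg _)
      (L1.integrable_coeFn u).norm).mp h2
  rw [Lp.eq_zero_iff_ae_eq_zero]
  filter_upwards [h3] with x hx
  simpa using norm_eq_zero.mp (by simpa using hx)

set_option maxHeartbeats 1000000 in
/-- Let `T` preserve Lebesgue measure on `[0,1]` and let `L` be its transfer operator
(characterised by the duality `∫ φ · (g ∘ T) = ∫ (Lφ) · g` for bounded `g`).  If
`ψ ∈ L^∞` satisfies `Lψ = 0` and `ψ ≠ 0`, then for `|z| < 1` the series
`h_z = ∑ z^ℓ ψ∘T^ℓ` converges in every `L^p`, `1 ≤ p ≤ ∞`, is nonzero, and satisfies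
`L h_z = z h_z`. -/
theorem transfer_eigenfunction
    (T : ℝ → ℝ) (hT : MeasurePreserving T μ01 μ01)
    (L : Lp ℂ 1 μ01 →L[ℂ] Lp ℂ 1 μ01)
    (hL : ∀ (φ : Lp ℂ 1 μ01) (g : ℝ → ℂ), MemLp g ⊤ μ01 →
      ∫ x, (φ : ℝ → ℂ) x * g (T x) ∂μ01 = ∫ x, (L φ : ℝ → ℂ) x * g x ∂μ01)
    (ψf : ℝ → ℂ) (hψtop : MemLp ψf ⊤ μ01) (hψ1 : MemLp ψf 1 μ01)
    (hψne : ¬ ψf =ᵐ[μ01] 0) (hLψ : L (hψ1.toLp ψf) = 0)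
    (z : ℂ) (hz : ‖z‖ < 1) :
    (∀ p : ℝ≥0∞, 1 ≤ p →
      MemLp (fun x => ∑' ℓ : ℕ, z ^ ℓ * ψf (T^[ℓ] x)) p μ01 ∧
      Tendsto (fun N => eLpNorm (fun x => (∑' ℓ : ℕ, z ^ ℓ * ψf (T^[ℓ] x)) -
        ∑ ℓ ∈ Finset.range N, z ^ ℓ * ψf (T^[ℓ] x)) p μ01) atTop (𝓝 0)) ∧
    ∃ h : Lp ℂ 1 μ01,
      (⇑h =ᵐ[μ01] fun x => ∑' ℓ : ℕ, z ^ ℓ * ψf (T^[ℓ] x)) ∧ h ≠ 0 ∧ L h = z • h := by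
  suffices H : ∀ F : ℝ → ℂ, F = (fun x => ∑' ℓ : ℕ, z ^ ℓ * ψf (T^[ℓ] x)) →
      (∀ p : ℝ≥0∞, 1 ≤ p →
        MemLp F p μ01 ∧
        Tendsto (fun N => eLpNorm (fun x => F x -
          ∑ ℓ ∈ Finset.range N, z ^ ℓ * ψf (T^[ℓ] x)) p μ01) atTop (𝓝 0)) ∧
      ∃ h : Lp ℂ 1 μ01, (⇑h =ᵐ[μ01] F) ∧ h ≠ 0 ∧ L h = z • h by
    exact H _ rfl
  intro F hFdef
  obtain ⟨C, hC0, hCψ⟩ := exists_ae_bound_of_memℒp_top hψtop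
  -- a.e. all iterates are bounded
  have hGae : ∀ᵐ x ∂μ01, ∀ ℓ : ℕ, ‖ψf (T^[ℓ] x)‖ ≤ C := by
    rw [ae_all_iff]
    intro ℓ
    exact ae_of_ae_map (hT.iterate ℓ).measurable.aemeasurable
      ((by rwa [(hT.iterate ℓ).map_eq]) :
        ∀ᵐ y ∂(Measure.map (T^[ℓ]) μ01), ‖ψf y‖ ≤ C)
  have hzn : (0 : ℝ) ≤ ‖z‖ := norm_nonneg z
  have hgeo : Summable (fun ℓ : ℕ => C * ‖z‖ ^ ℓ) :=
    (summable_geometric_of_lt_one hzn hz).mul_left C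
  have hbd : ∀ x, (∀ ℓ, ‖ψf (T^[ℓ] x)‖ ≤ C) →
      ∀ ℓ, ‖z ^ ℓ * ψf (T^[ℓ] x)‖ ≤ C * ‖z‖ ^ ℓ := by
    intro x hx ℓ
    rw [norm_mul, norm_pow, mul_comm]
    exact mul_le_mul_of_nonneg_right (hx ℓ) (pow_nonneg hzn ℓ)
  have hsum : ∀ x, (∀ ℓ, ‖ψf (T^[ℓ] x)‖ ≤ C) →
      Summable (fun ℓ : ℕ => z ^ ℓ * ψf (T^[ℓ] x)) := fun x hx =>
    Summable.of_norm_bounded hgeo (hbd x hx)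
  have hnorm : ∀ x, (∀ ℓ, ‖ψf (T^[ℓ] x)‖ ≤ C) →
      Summable (fun ℓ : ℕ => ‖z ^ ℓ * ψf (T^[ℓ] x)‖) := fun x hx =>
    Summable.of_nonneg_of_le (fun ℓ => norm_nonneg _) (hbd x hx) hgeo
  have hFx : ∀ x, F x = ∑' ℓ : ℕ, z ^ ℓ * ψf (T^[ℓ] x) := fun x => by rw [hFdef]
  -- measurability
  have hfmeas : ∀ ℓ : ℕ, AEStronglyMeasurable (fun x => z ^ ℓ * ψf (T^[ℓ] x)) μ01 := by
    intro ℓ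
    exact (hψtop.aestronglyMeasurable.comp_quasiMeasurePreserving
      (hT.iterate ℓ).quasiMeasurePreserving).const_mul _
  have hSmeas : ∀ N, AEStronglyMeasurable
      (fun x => ∑ ℓ ∈ Finset.range N, z ^ ℓ * ψf (T^[ℓ] x)) μ01 := fun N =>
    Finset.aestronglyMeasurable_fun_sum (Finset.range N) (fun ℓ _ => hfmeas ℓ)
  have hFmeas : AEStronglyMeasurable F μ01 := by
    apply aestronglyMeasurable_of_tendsto_ae atTop hSmeas
    filter_upwards [hGae] with x hx
    rw [hFx]
    exact (hsum x hx).hasSum.tendsto_sum_nat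
  -- uniform bound on F
  have hFbd : ∀ᵐ x ∂μ01, ‖F x‖ ≤ C * (1 - ‖z‖)⁻¹ := by
    filter_upwards [hGae] with x hx
    rw [hFx]
    calc ‖∑' ℓ : ℕ, z ^ ℓ * ψf (T^[ℓ] x)‖
        ≤ ∑' ℓ : ℕ, ‖z ^ ℓ * ψf (T^[ℓ] x)‖ := norm_tsum_le_tsum_norm (hnorm x hx)
      _ ≤ ∑' ℓ : ℕ, C * ‖z‖ ^ ℓ := Summable.tsum_le_tsum (hbd x hx) (hnorm x hx) hgeo
      _ = C * (1 - ‖z‖)⁻¹ := by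
          rw [tsum_mul_left, tsum_geometric_of_lt_one hzn hz]
  have hFtop : MemLp F ⊤ μ01 := memLp_top_of_bound hFmeas _ hFbd
  -- tail bound
  set B : ℕ → ℝ := fun N => C * (1 - ‖z‖)⁻¹ * ‖z‖ ^ N with hBdef
  have hTail : ∀ N, ∀ᵐ x ∂μ01,
      ‖F x - ∑ ℓ ∈ Finset.range N, z ^ ℓ * ψf (T^[ℓ] x)‖ ≤ B N := by
    intro N
    filter_upwards [hGae] with x hx
    have hs := hsum x hx
    have heq : (∑' i : ℕ, z ^ (i + N) * ψf (T^[i + N] x)) =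
        F x - ∑ ℓ ∈ Finset.range N, z ^ ℓ * ψf (T^[ℓ] x) := by
      rw [hFx]
      exact eq_sub_iff_add_eq'.mpr (Summable.sum_add_tsum_nat_add N hs)
    rw [← heq]
    have hns : Summable (fun i : ℕ => ‖z ^ (i + N) * ψf (T^[i + N] x)‖) :=
      (summable_nat_add_iff N).mpr (hnorm x hx)
    have hgs : Summable (fun i : ℕ => C * ‖z‖ ^ (i + N)) :=
      (summable_nat_add_iff N).mpr hgeo
    calc ‖∑' i : ℕ, z ^ (i + N) * ψf (T^[i + N] x)‖
        ≤ ∑' i : ℕ, ‖z ^ (i + N) * ψf (T^[i + N] x)‖ := norm_tsum_le_tsum_norm hns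
      _ ≤ ∑' i : ℕ, C * ‖z‖ ^ (i + N) := Summable.tsum_le_tsum (fun i => hbd x hx (i + N)) hns hgs
      _ = ∑' i : ℕ, (C * ‖z‖ ^ N) * ‖z‖ ^ i := tsum_congr fun i => by rw [pow_add]; ring
      _ = (C * ‖z‖ ^ N) * (1 - ‖z‖)⁻¹ := by
          rw [tsum_mul_left, tsum_geometric_of_lt_one hzn hz]
      _ = B N := by rw [hBdef]; ring
  have hB0 : Tendsto B atTop (𝓝 0) := by
    have := (tendsto_pow_atTop_nhds_zero_of_lt_one hzn hz).const_mul (C * (1 - ‖z‖)⁻¹)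
    simpa [hBdef] using this
  -- part 1
  have part1 : ∀ p : ℝ≥0∞, 1 ≤ p →
      MemLp F p μ01 ∧
      Tendsto (fun N => eLpNorm (fun x => F x -
        ∑ ℓ ∈ Finset.range N, z ^ ℓ * ψf (T^[ℓ] x)) p μ01) atTop (𝓝 0) := by
    intro p _
    refine ⟨hFtop.mono_exponent le_top, ?_⟩
    have hle : ∀ N, eLpNorm (fun x => F x -
        ∑ ℓ ∈ Finset.range N, z ^ ℓ * ψf (T^[ℓ] x)) p μ01 ≤ ENNReal.ofReal (B N) := by
      intro N
      calc eLpNorm _ p μ01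
          ≤ μ01 univ ^ p.toReal⁻¹ * ENNReal.ofReal (B N) := eLpNorm_le_of_ae_bound (hTail N)
        _ = ENNReal.ofReal (B N) := by rw [measure_univ, ENNReal.one_rpow, one_mul]
    refine tendsto_of_tendsto_of_tendsto_of_le_of_le tendsto_const_nhds ?_
      (fun N => zero_le) hle
    simpa using ENNReal.tendsto_ofReal hB0
  -- the L¹ element
  have mem1 : MemLp F 1 μ01 := hFtop.mono_exponent le_top
  set h : Lp ℂ 1 μ01 := mem1.toLp F with hhdef
  have hcoe : ⇑h =ᵐ[μ01] F := mem1.coeFn_toLp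
  -- functional equation  F = ψ + z • (F ∘ T)  a.e.
  have hfe : ∀ᵐ x ∂μ01, F x = ψf x + z * F (T x) := by
    filter_upwards [hGae] with x hx
    have hxT : ∀ ℓ, ‖ψf (T^[ℓ] (T x))‖ ≤ C := fun ℓ => by
      rw [← Function.iterate_succ_apply]; exact hx (ℓ + 1)
    have h1 := Summable.tsum_eq_zero_add (hsum x hx)
    rw [hFx, h1]
    simp only [pow_zero, one_mul, Function.iterate_zero_apply]
    congr 1
    calc (∑' n : ℕ, z ^ (n + 1) * ψf (T^[n + 1] x))
        = ∑' n : ℕ, z * (z ^ n * ψf (T^[n] (T x))) := by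
          refine tsum_congr fun n => ?_
          rw [Function.iterate_succ_apply, pow_succ]
          ring
      _ = z * ∑' n : ℕ, z ^ n * ψf (T^[n] (T x)) := tsum_mul_left
      _ = z * F (T x) := by rw [hFx]
  -- nonvanishing
  have hne : h ≠ 0 := by
    intro h0
    have hF0 : ∀ᵐ x ∂μ01, F x = 0 := by
      have := Lp.eq_zero_iff_ae_eq_zero.mp h0
      filter_upwards [hcoe.symm.trans this] with x hx using hx
    have hFT0 : ∀ᵐ x ∂μ01, F (T x) = 0 :=
      ae_of_ae_map hT.measurable.aemeasurable
        ((by rwa [hT.map_eq]) : ∀ᵐ y ∂(Measure.map T μ01), F y = 0)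
    have : ψf =ᵐ[μ01] 0 := by
      filter_upwards [hfe, hF0, hFT0] with x h1 h2 h3
      rw [h2, h3, mul_zero, add_zero] at h1
      simpa using h1.symm
    exact hψne this
  -- bounded integrands helper
  have hint : ∀ {u : ℝ → ℂ}, AEStronglyMeasurable u μ01 → ∀ {c : ℝ},
      (∀ᵐ x ∂μ01, ‖u x‖ ≤ c) → Integrable u μ01 := by
    intro u hu c hb
    exact (memLp_top_of_bound hu c hb).integrable le_top
  -- eigenvalue equation
  have heig : L h = z • h := by
    rw [← sub_eq_zero]
    apply L1_eq_zero_of_integral_mul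
    intro g hg
    obtain ⟨Cg, hCg0, hCg⟩ := exists_ae_bound_of_memℒp_top hg
    have hgTm : AEStronglyMeasurable (fun x => g (T x)) μ01 :=
      hg.aestronglyMeasurable.comp_quasiMeasurePreserving hT.quasiMeasurePreserving
    have hgTb : ∀ᵐ x ∂μ01, ‖g (T x)‖ ≤ Cg :=
      ae_of_ae_map hT.measurable.aemeasurable
        ((by rwa [hT.map_eq]) : ∀ᵐ y ∂(Measure.map T μ01), ‖g y‖ ≤ Cg)
    have hFTm : AEStronglyMeasurable (fun x => F (T x)) μ01 :=
      hFmeas.comp_quasiMeasurePreserving hT.quasiMeasurePreserving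
    have hFTb : ∀ᵐ x ∂μ01, ‖F (T x)‖ ≤ C * (1 - ‖z‖)⁻¹ :=
      ae_of_ae_map hT.measurable.aemeasurable
        ((by rwa [hT.map_eq]) : ∀ᵐ y ∂(Measure.map T μ01), ‖F y‖ ≤ C * (1 - ‖z‖)⁻¹)
    -- integrabilities
    have int1 : Integrable (fun x => ψf x * g (T x)) μ01 := by
      apply hint (hψtop.aestronglyMeasurable.mul hgTm)
        (c := C * Cg)
      filter_upwards [hCψ, hgTb] with x h1 h2
      calc ‖ψf x * g (T x)‖ = ‖ψf x‖ * ‖g (T x)‖ := norm_mul _ _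
        _ ≤ C * Cg := mul_le_mul h1 h2 (norm_nonneg _) hC0
    have int2 : Integrable (fun x => z * F (T x) * g (T x)) μ01 := by
      apply hint (((hFTm.const_mul z)).mul hgTm)
        (c := ‖z‖ * (C * (1 - ‖z‖)⁻¹) * Cg)
      filter_upwards [hFTb, hgTb] with x h1 h2
      calc ‖z * F (T x) * g (T x)‖ = ‖z‖ * ‖F (T x)‖ * ‖g (T x)‖ := by
            rw [norm_mul, norm_mul]
        _ ≤ ‖z‖ * (C * (1 - ‖z‖)⁻¹) * Cg :=
            mul_le_mul (mul_le_mul_of_nonneg_left h1 hzn) h2 (norm_nonneg _)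
              (mul_nonneg hzn (mul_nonneg hC0 (inv_nonneg.mpr (by linarith))))
    -- step 1 : ∫ (L h) g = ∫ F (g ∘ T)
    have step1 : ∫ x, (L h : ℝ → ℂ) x * g x ∂μ01 = ∫ x, F x * g (T x) ∂μ01 := by
      rw [← hL h g hg]
      refine integral_congr_ae ?_
      filter_upwards [hcoe] with x hx
      simp only [hx]
    -- step 2 : split using functional equation
    have step2 : ∫ x, F x * g (T x) ∂μ01 =
        (∫ x, ψf x * g (T x) ∂μ01) + ∫ x, z * F (T x) * g (T x) ∂μ01 := by
      rw [← integral_add int1 int2]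
      refine integral_congr_ae ?_
      filter_upwards [hfe] with x hx
      simp only [hx]; ring
    -- step 3 : the ψ part vanishes
    have step3 : ∫ x, ψf x * g (T x) ∂μ01 = 0 := by
      have hdual := hL (hψ1.toLp ψf) g hg
      have e1 : ∫ x, ((hψ1.toLp ψf : Lp ℂ 1 μ01) : ℝ → ℂ) x * g (T x) ∂μ01 =
          ∫ x, ψf x * g (T x) ∂μ01 := by
        refine integral_congr_ae ?_
        filter_upwards [hψ1.coeFn_toLp] with x hx
        simp only [hx]
      have e2 : ∫ x, ((L (hψ1.toLp ψf) : Lp ℂ 1 μ01) : ℝ → ℂ) x * g x ∂μ01 = 0 := by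
        rw [hLψ]
        have hz0 : ∀ᵐ x ∂μ01, ((0 : Lp ℂ 1 μ01) : ℝ → ℂ) x * g x = 0 := by
          filter_upwards [Lp.coeFn_zero ℂ 1 μ01] with x hx
          simp [hx]
        rw [integral_congr_ae hz0, integral_zero]
      rw [← e1, hdual, e2]
    -- step 4 : change of variables
    have step4 : ∫ x, z * F (T x) * g (T x) ∂μ01 = z * ∫ x, F x * g x ∂μ01 := by
      have hcv : ∫ y, F y * g y ∂μ01 = ∫ x, F (T x) * g (T x) ∂μ01 := by
        conv_lhs => rw [← hT.map_eq]
        exact integral_map hT.measurable.aemeasurable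
          (by rw [hT.map_eq]; exact hFmeas.mul hg.aestronglyMeasurable)
      rw [show (fun x => z * F (T x) * g (T x)) = fun x => z * (F (T x) * g (T x)) from
        funext fun x => mul_assoc _ _ _]
      rw [integral_const_mul, ← hcv]
    -- step 5 : ∫ (z • h) g = z ∫ F g
    have step5 : ∫ x, ((z • h : Lp ℂ 1 μ01) : ℝ → ℂ) x * g x ∂μ01 =
        z * ∫ x, F x * g x ∂μ01 := by
      have e : ((z • h : Lp ℂ 1 μ01) : ℝ → ℂ) =ᵐ[μ01] fun x => z * F x := by
        filter_upwards [Lp.coeFn_smul z h, hcoe] with x h1 h2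
        rw [h1, Pi.smul_apply, smul_eq_mul, h2]
      rw [integral_congr_ae (show (fun x => ((z • h : Lp ℂ 1 μ01) : ℝ → ℂ) x * g x)
        =ᵐ[μ01] fun x => (z * F x) * g x by
          filter_upwards [e] with x hx
          simp only [hx])]
      rw [show (fun x => z * F x * g x) = fun x => z * (F x * g x) from
        funext fun x => mul_assoc _ _ _]
      rw [integral_const_mul z]
    -- combine
    have hsub : ((L h - z • h : Lp ℂ 1 μ01) : ℝ → ℂ) =ᵐ[μ01]
        fun x => (L h : ℝ → ℂ) x - ((z • h : Lp ℂ 1 μ01) : ℝ → ℂ) x := by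
      filter_upwards [Lp.coeFn_sub (L h) (z • h)] with x hx
      rw [hx]; rfl
    have iLh : Integrable (fun x => (L h : ℝ → ℂ) x * g x) μ01 := by
      have := Integrable.bdd_mul (c := Cg) (L1.integrable_coeFn (L h))
        hg.aestronglyMeasurable hCg
      exact this.congr (ae_of_all _ fun x => mul_comm _ _)
    have izh : Integrable (fun x => ((z • h : Lp ℂ 1 μ01) : ℝ → ℂ) x * g x) μ01 := by
      have := Integrable.bdd_mul (c := Cg) (L1.integrable_coeFn (z • h))
        hg.aestronglyMeasurable hCg
      exact this.congr (ae_of_all _ fun x => mul_comm _ _)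
    calc ∫ x, ((L h - z • h : Lp ℂ 1 μ01) : ℝ → ℂ) x * g x ∂μ01
        = ∫ x, ((L h : ℝ → ℂ) x * g x - ((z • h : Lp ℂ 1 μ01) : ℝ → ℂ) x * g x) ∂μ01 :=
          integral_congr_ae (by
            filter_upwards [hsub] with x hx
            simp only [hx]; ring)
      _ = (∫ x, (L h : ℝ → ℂ) x * g x ∂μ01) -
          ∫ x, ((z • h : Lp ℂ 1 μ01) : ℝ → ℂ) x * g x ∂μ01 := integral_sub iLh izh
      _ = 0 := by rw [step1, step2, step3, step4, step5]; ring
  exact ⟨part1, ⟨h, hcoe, hne, heig⟩⟩
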